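/- Let n be a positive integer and let R be a nonempty subset of ℤ/nℤ. Let F = {A + R : A ⊆ ℤ/nℤ}. Then there exists an element x ∈ ℤ/nℤ such that x is contained in at least half of the sets in F, i.e. 2·|{S ∈ F : x ∈ S}| ≥ |F|. In other words, the Union-Closed Conjecture holds for F. -/

import Mathlib

open Finset Pointwise

set_option maxHeartbeats 1000000

private def eS {n : ℕ} [NeZero n] (R S : Finset (ZMod n)) : Finset (ZMod n) :=
  univ.filter (fun x => ∀ r ∈ R, x + r ∈ S)

private lemma eS_neg_compl {n : ℕ} [NeZero n] (R A : Finset (ZMod n)) :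
    eS R (((A + R)ᶜ).image (fun x => -x) + R) = ((A + R)ᶜ).image (fun x => -x) := by
  ext x
  simp only [eS, mem_filter, mem_univ, true_and]
  constructor
  · intro hx
    by_contra hxB
    have hxS : -x ∈ A + R := by
      by_contra h
      exact hxB (mem_image.2 ⟨-x, by simpa using h, by simp⟩)
    obtain ⟨a, ha, r₁, hr₁, hxe⟩ := Finset.mem_add.1 hxS
    obtain ⟨b, hb, r₂, hr₂, hbe⟩ := Finset.mem_add.1 (hx r₁ hr₁)
    obtain ⟨y, hy, rfl⟩ := mem_image.1 hb
    have hya : y = a + r₂ := by linear_combination -hbe - hxe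
    rw [Finset.mem_compl] at hy
    exact hy (hya ▸ Finset.add_mem_add ha hr₂)
  · intro hxB r hr
    exact Finset.add_mem_add hxB hr

private lemma card_eS_le {n : ℕ} [NeZero n] {R : Finset (ZMod n)} (hR : R.Nonempty)
    (S : Finset (ZMod n)) : (eS R S).card ≤ S.card := by
  obtain ⟨r₀, hr₀⟩ := hR
  apply Finset.card_le_card_of_injOn (fun x => x + r₀)
  · intro x hx
    simp only [Finset.mem_coe, eS, mem_filter, mem_univ, true_and] at hx
    exact hx r₀ hr₀
  · intro a _ b _ h
    simpa using h

/-- The Union-Closed Conjecture holds for the family `F = {A + R : A ⊆ ℤ/nℤ}`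
of all unions of cyclic translates of a fixed nonempty `R ⊆ ℤ/nℤ`: there is an
element `x` contained in at least half of the sets of `F`. -/
theorem stmt_1 (n : ℕ) [NeZero n] (R : Finset (ZMod n)) (hR : R.Nonempty)
    (F : Finset (Finset (ZMod n)))
    (hF : F = (univ : Finset (Finset (ZMod n))).image (fun A => A + R)) :
    ∃ x : ZMod n, 2 * (F.filter (fun S => x ∈ S)).card ≥ F.card := by
  subst hF
  set F := (univ : Finset (Finset (ZMod n))).image (fun A => A + R) with hF
  have memF : ∀ S, S ∈ F ↔ ∃ A, A + R = S := by
    intro S; simp [hF]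
  -- the map θ
  set θ : Finset (ZMod n) → Finset (ZMod n) := fun S => (Sᶜ.image (fun x => -x)) + R with hθ
  have hθmem : ∀ S ∈ F, θ S ∈ F := by
    intro S _; exact (memF _).2 ⟨_, rfl⟩
  have hkey : ∀ S ∈ F, eS R (θ S) = Sᶜ.image (fun x => -x) := by
    intro S hS
    obtain ⟨A, rfl⟩ := (memF S).1 hS
    exact eS_neg_compl R A
  have hinj : Set.InjOn θ F := by
    intro S hS T hT h
    have h2 : Sᶜ.image (fun x : ZMod n => -x) = Tᶜ.image (fun x => -x) := by
      rw [← hkey S hS, ← hkey T hT, h]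
    have h3 : Sᶜ = Tᶜ :=
      Finset.image_injective (f := fun x : ZMod n => -x) (fun a b => by simp) h2
    exact compl_injective h3
  have himg : F.image θ = F := by
    apply Finset.eq_of_subset_of_card_le
    · intro T hT
      obtain ⟨S, hS, rfl⟩ := mem_image.1 hT
      exact hθmem S hS
    · rw [Finset.card_image_of_injOn hinj]
  -- sum inequality : n * |F| ≤ 2 * Σ |S|
  have hsum1 : ∑ S ∈ F, Sᶜ.card = ∑ S ∈ F, (eS R (θ S)).card := by
    apply Finset.sum_congr rfl
    intro S hS
    rw [hkey S hS, Finset.card_image_of_injective _ (fun a b => by simp)]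
  have hsum2 : ∑ S ∈ F, (eS R (θ S)).card = ∑ T ∈ F, (eS R T).card := by
    calc ∑ S ∈ F, (eS R (θ S)).card
        = ∑ T ∈ F.image θ, (eS R T).card :=
          (Finset.sum_image (f := fun T => (eS R T).card) (fun a ha b hb => hinj ha hb)).symm
    _ = ∑ T ∈ F, (eS R T).card := by rw [himg]
  have hsum3 : ∑ T ∈ F, (eS R T).card ≤ ∑ T ∈ F, T.card :=
    Finset.sum_le_sum (fun T _ => card_eS_le hR T)
  have hcompl : ∀ S : Finset (ZMod n), S.card + Sᶜ.card = n := by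
    intro S
    rw [Finset.card_add_card_compl, ZMod.card]
  have hmain : n * F.card ≤ 2 * ∑ S ∈ F, S.card := by
    calc n * F.card = ∑ S ∈ F, n := by rw [Finset.sum_const, smul_eq_mul, mul_comm]
    _ = ∑ S ∈ F, (S.card + Sᶜ.card) := by simp [hcompl]
    _ = ∑ S ∈ F, S.card + ∑ S ∈ F, Sᶜ.card := Finset.sum_add_distrib
    _ ≤ ∑ S ∈ F, S.card + ∑ S ∈ F, S.card := by
        rw [hsum1, hsum2]; exact Nat.add_le_add_left hsum3 _
    _ = 2 * ∑ S ∈ F, S.card := by ring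
  -- double counting
  have hdc : ∑ x : ZMod n, (F.filter (fun S => x ∈ S)).card = ∑ S ∈ F, S.card := by
    have : ∀ x : ZMod n, (F.filter (fun S => x ∈ S)).card
        = ∑ S ∈ F, (if x ∈ S then 1 else 0) := fun x => Finset.card_filter _ _
    rw [Finset.sum_congr rfl (fun x _ => this x), Finset.sum_comm]
    apply Finset.sum_congr rfl
    intro S _
    rw [← Finset.card_filter]
    simp [Finset.filter_univ_mem]
  -- pigeonhole
  by_contra hcon
  push_neg at hcon
  have hlt : ∀ x : ZMod n, 2 * (F.filter (fun S => x ∈ S)).card + 1 ≤ F.card := by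
    intro x; exact hcon x
  have h1 : ∑ x : ZMod n, (2 * (F.filter (fun S => x ∈ S)).card + 1)
      ≤ ∑ _x : ZMod n, F.card := Finset.sum_le_sum (fun x _ => hlt x)
  have hcard : (univ : Finset (ZMod n)).card = n := by
    rw [Finset.card_univ, ZMod.card]
  rw [Finset.sum_add_distrib, ← Finset.mul_sum, Finset.sum_const, Finset.sum_const,
    smul_eq_mul, smul_eq_mul, mul_one, hcard, hdc] at h1
  have : n * F.card + n ≤ n * F.card := by
    calc n * F.card + n ≤ 2 * ∑ S ∈ F, S.card + n := by omega
    _ ≤ n * F.card := by omega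
  have hn : n ≠ 0 := NeZero.ne n
  omega
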